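/- Let {p_t}_{t>0} and {q_t}_{t>0} be two Markovian semigroups on a locally compact space K with the same regular Dirichlet form, such that p_t f = q_t f holds μ-a.e. for every t > 0 and bounded continuous f, each q_t f is continuous on K, and p_t has an absolutely continuous transition kernel p_t(x,dy) = p_t(x,y)dμ(y). Then p_t f(x) = q_t f(x) for every x ∈ K, t > 0, and every bounded Borel f; in particular p_t is strong Feller. -/
import Mathlib


open MeasureTheory Filter Set
open scoped ENNReal NNReal

/-- Two sub-Markovian semigroups (given by kernels `κ`, `η`) associated with the same
Dirichlet form, agreeing `μ`-a.e. on bounded continuous functions, with `η` strong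
Feller and `κ` having an absolutely continuous kernel, agree everywhere on bounded
Borel functions; in particular `κ` is strong Feller. -/
theorem stmt_8 {K : Type*} [MetricSpace K] [MeasurableSpace K] [BorelSpace K]
    [LocallyCompactSpace K] [SecondCountableTopology K]
    (μ : Measure K)
    (κ η : ℝ → K → Measure K)
    (hκsub : ∀ t : ℝ, 0 < t → ∀ x, κ t x Set.univ ≤ 1)
    (hηsub : ∀ t : ℝ, 0 < t → ∀ x, η t x Set.univ ≤ 1)
    -- a.e. agreement on bounded continuous functions
    (hae : ∀ t : ℝ, 0 < t → ∀ f : K → ℝ, Continuous f → (∃ M, ∀ x, |f x| ≤ M) →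
      (fun x => ∫ y, f y ∂(κ t x)) =ᵐ[μ] fun x => ∫ y, f y ∂(η t x))
    -- η is strong Feller
    (hηSF : ∀ t : ℝ, 0 < t → ∀ f : K → ℝ, Measurable f → (∃ M, ∀ x, |f x| ≤ M) →
      Continuous fun x => ∫ y, f y ∂(η t x))
    -- absolute continuity of the transition kernel of κ
    (hac : ∀ t : ℝ, 0 < t → ∀ x, κ t x ≪ μ)
    -- semigroup property of κ: p_{t+ε} f (x) = p_ε (p_t f) (x) for all x
    (hsg : ∀ t ε : ℝ, 0 < t → 0 < ε → ∀ f : K → ℝ, Measurable f →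
      (∃ M, ∀ x, |f x| ≤ M) → ∀ x,
      ∫ y, f y ∂(κ (t + ε) x) = ∫ y, (∫ z, f z ∂(κ t y)) ∂(κ ε x))
    -- pointwise small-time continuity at bounded continuous functions
    (hpt : ∀ f : K → ℝ, Continuous f → (∃ M, ∀ x, |f x| ≤ M) → ∀ x,
      Tendsto (fun ε => ∫ y, f y ∂(κ ε x))
        (nhdsWithin (0 : ℝ) (Set.Ioi (0 : ℝ))) (nhds (f x))) :
    ∀ t : ℝ, 0 < t → ∀ f : K → ℝ, Measurable f → (∃ M, ∀ x, |f x| ≤ M) →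
      (∀ x, ∫ y, f y ∂(κ t x) = ∫ y, f y ∂(η t x)) ∧
      Continuous fun x => ∫ y, f y ∂(κ t x) := by
  -- finiteness of the kernels
  have finκ : ∀ s : ℝ, 0 < s → ∀ x, IsFiniteMeasure (κ s x) := fun s hs x =>
    ⟨lt_of_le_of_lt (hκsub s hs x) ENNReal.one_lt_top⟩
  have finη : ∀ s : ℝ, 0 < s → ∀ x, IsFiniteMeasure (η s x) := fun s hs x =>
    ⟨lt_of_le_of_lt (hηsub s hs x) ENNReal.one_lt_top⟩
  -- the sequence εₙ = 1/(n+1), tending to 0 from the right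
  set e : ℕ → ℝ := fun n => 1 / ((n : ℝ) + 1) with he_def
  have he_pos : ∀ n, 0 < e n := fun n => by positivity
  have he_tendsto : Tendsto e atTop (nhdsWithin (0 : ℝ) (Set.Ioi (0 : ℝ))) :=
    tendsto_nhdsWithin_of_tendsto_nhds_of_eventually_within e
      tendsto_one_div_add_atTop_nhds_zero_nat
      (Eventually.of_forall fun n => he_pos n)
  -- a generic bound on integrals against sub-Markovian kernels
  have hbound : ∀ (ν : Measure K), ν Set.univ ≤ 1 → ∀ (g : K → ℝ) (M : ℝ), 0 ≤ M →
      (∀ y, |g y| ≤ M) → |∫ y, g y ∂ν| ≤ M := by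
    intro ν hν g M hM0 hM
    haveI : IsFiniteMeasure ν := ⟨lt_of_le_of_lt hν ENNReal.one_lt_top⟩
    have h1 : ‖∫ y, g y ∂ν‖ ≤ M * (ν Set.univ).toReal :=
      norm_integral_le_of_norm_le_const (Eventually.of_forall fun y => by
        simpa [Real.norm_eq_abs] using hM y)
    have h2 : (ν Set.univ).toReal ≤ 1 := by
      have := ENNReal.toReal_mono (by simp) hν
      simpa using this
    calc |∫ y, g y ∂ν| ≤ M * (ν Set.univ).toReal := by simpa [Real.norm_eq_abs] using h1
      _ ≤ M * 1 := by exact mul_le_mul_of_nonneg_left h2 hM0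
      _ = M := mul_one M
  -- Step 1: pointwise equality for bounded continuous functions
  have key : ∀ s : ℝ, 0 < s → ∀ g : K → ℝ, Continuous g → (∃ M, ∀ x, |g x| ≤ M) →
      ∀ x, ∫ y, g y ∂(κ s x) = ∫ y, g y ∂(η s x) := by
    intro s hs g hg hMg x
    obtain ⟨M, hM⟩ := hMg
    set M' : ℝ := max M 0 with hM'def
    have hM' : ∀ y, |g y| ≤ M' := fun y => (hM y).trans (le_max_left _ _)
    have hM'0 : 0 ≤ M' := le_max_right _ _
    have hg_meas : Measurable g := hg.measurable
    have hMg' : ∃ M, ∀ x, |g x| ≤ M := ⟨M', hM'⟩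
    -- η_s g is continuous and bounded
    have ηg_cont : Continuous (fun y => ∫ z, g z ∂(η s y)) := hηSF s hs g hg_meas hMg'
    have ηg_bdd : ∀ y, |∫ z, g z ∂(η s y)| ≤ M' := fun y =>
      hbound (η s y) (hηsub s hs y) g M' hM'0 hM'
    -- for every ε > 0, κ_{s+ε} g (x) = ∫ (η_s g) dκ_ε(x)
    have stepA : ∀ ε : ℝ, 0 < ε →
        ∫ y, g y ∂(κ (s + ε) x) = ∫ y, (∫ z, g z ∂(η s y)) ∂(κ ε x) := by
      intro ε hε
      rw [hsg s ε hs hε g hg_meas hMg' x]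
      exact integral_congr_ae ((hae s hs g hg hMg').filter_mono (hac ε hε x).ae_le)
    -- limit 1 : κ_{s+εₙ} g (x) → η_s g (x)
    have lim1 : Tendsto (fun n => ∫ y, g y ∂(κ (s + e n) x)) atTop
        (nhds (∫ z, g z ∂(η s x))) := by
      have h := (hpt (fun y => ∫ z, g z ∂(η s y)) ηg_cont ⟨M', ηg_bdd⟩ x).comp he_tendsto
      refine h.congr fun n => ?_
      exact (stepA (e n) (he_pos n)).symm
    -- for every ε > 0, κ_{s+ε} g (x) = ∫ (η_ε g) dκ_s(x)
    have stepB : ∀ ε : ℝ, 0 < ε →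
        ∫ y, g y ∂(κ (s + ε) x) = ∫ y, (∫ z, g z ∂(η ε y)) ∂(κ s x) := by
      intro ε hε
      rw [add_comm s ε, hsg ε s hε hs g hg_meas hMg' x]
      exact integral_congr_ae ((hae ε hε g hg hMg').filter_mono (hac s hs x).ae_le)
    -- limit 2 : κ_{s+εₙ} g (x) → κ_s g (x), by dominated convergence
    have lim2 : Tendsto (fun n => ∫ y, g y ∂(κ (s + e n) x)) atTop
        (nhds (∫ y, g y ∂(κ s x))) := by
      haveI := finκ s hs x
      have hdom : Tendsto (fun n => ∫ y, (∫ z, g z ∂(η (e n) y)) ∂(κ s x)) atTop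
          (nhds (∫ y, g y ∂(κ s x))) := by
        apply tendsto_integral_of_dominated_convergence (fun _ => M')
        · intro n
          exact (hηSF (e n) (he_pos n) g hg_meas hMg').aestronglyMeasurable
        · exact integrable_const M'
        · intro n
          refine Eventually.of_forall fun y => ?_
          simpa [Real.norm_eq_abs] using
            hbound (η (e n) y) (hηsub (e n) (he_pos n) y) g M' hM'0 hM'
        · -- a.e. pointwise convergence
          have hforall : ∀ᵐ y ∂(κ s x), ∀ n,
              (∫ z, g z ∂(η (e n) y)) = ∫ z, g z ∂(κ (e n) y) := by
            rw [ae_all_iff]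
            intro n
            exact ((hae (e n) (he_pos n) g hg hMg').symm).filter_mono (hac s hs x).ae_le
          refine hforall.mono fun y hy => ?_
          have h := (hpt g hg hMg' y).comp he_tendsto
          exact h.congr fun n => (hy n).symm
      refine hdom.congr fun n => ?_
      exact (stepB (e n) (he_pos n)).symm
    exact tendsto_nhds_unique lim2 lim1
  -- Step 2: the kernels agree as measures
  have hmeas_eq : ∀ s : ℝ, 0 < s → ∀ x, κ s x = η s x := by
    intro s hs x
    haveI := finκ s hs x
    haveI := finη s hs x
    apply ext_of_forall_lintegral_eq_of_IsFiniteMeasure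
    intro f
    -- the real-valued version of f
    set g : K → ℝ := fun y => (f y : ℝ) with hg_def
    have hg_cont : Continuous g := NNReal.continuous_coe.comp f.continuous
    have hg_nonneg : ∀ y, 0 ≤ g y := fun y => (f y).coe_nonneg
    have hg_bdd : ∃ M, ∀ y, |g y| ≤ M := by
      refine ⟨((nndist f 0 : ℝ≥0) : ℝ), fun y => ?_⟩
      rw [abs_of_nonneg (hg_nonneg y)]
      exact_mod_cast BoundedContinuousFunction.NNReal.upper_bound f y
    have h1 : ∫ y, g y ∂(κ s x) = ∫ y, g y ∂(η s x) := key s hs g hg_cont hg_bdd x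
    -- convert real integrals to lintegrals
    have hconv : ∀ ν : Measure K, ∫ y, g y ∂ν = (∫⁻ y, ((f y : ℝ≥0) : ℝ≥0∞) ∂ν).toReal := by
      intro ν
      rw [integral_eq_lintegral_of_nonneg_ae (Eventually.of_forall hg_nonneg)
        hg_cont.measurable.aestronglyMeasurable]
      congr 1
      refine lintegral_congr fun y => ?_
      simp [hg_def]
    have h2 : (∫⁻ y, ((f y : ℝ≥0) : ℝ≥0∞) ∂(κ s x)).toReal
        = (∫⁻ y, ((f y : ℝ≥0) : ℝ≥0∞) ∂(η s x)).toReal := by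
      rw [← hconv (κ s x), ← hconv (η s x)]
      exact h1
    exact (ENNReal.toReal_eq_toReal_iff'
      (BoundedContinuousFunction.lintegral_lt_top_of_nnreal _ f).ne
      (BoundedContinuousFunction.lintegral_lt_top_of_nnreal _ f).ne).mp h2
  -- conclusion
  intro t ht f hf hMf
  have heq : (fun x => ∫ y, f y ∂(κ t x)) = fun x => ∫ y, f y ∂(η t x) := by
    funext x
    rw [hmeas_eq t ht x]
  constructor
  · intro x
    rw [hmeas_eq t ht x]
  · rw [heq]
    exact hηSF t ht f hf hMf
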